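/- arXiv:2402.09568 — 2 statements merged into one kernel-verified Lean document; each statement's English description precedes it below -/
import Mathlib

section
/- Let n and k be positive integers and z a k-coloring of {1,…,n}. The set M_{n,z} = {γ ∈ ker_ℤ DC_{n,z} : ‖γ‖₁ = 4} is a Markov basis for DC_{n,z}: for every b ∈ ℤ^{n + k(k+1)/2}, the graph whose vertex set is the fiber F(b) = {x ∈ ℕ^P : DC_{n,z} x = b}, with an edge between x and x' whenever x − x' ∈ M_{n,z} ∪ (−M_{n,z}), is connected. -/
open Finset

/-- The set `P` of 2-element subsets of `{1,…,n}`, encoded as ordered pairs. -/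
abbrev Edge (n : ℕ) : Type := {p : Fin n × Fin n // p.1 < p.2}

/-- Entry `γ_{uv}` of a vector `γ ∈ ℤ^P` at the unordered pair `{u,v}` (0 when `u = v`). -/
def ent {n : ℕ} (γ : Edge n → ℤ) (u v : Fin n) : ℤ :=
  if h : u < v then γ ⟨(u, v), h⟩ else if h : v < u then γ ⟨(v, u), h⟩ else 0

/-- Entry at `{u,v}` of a vector in `ℕ^P`. -/
def entN {n : ℕ} (x : Edge n → ℕ) (u v : Fin n) : ℕ :=
  if h : u < v then x ⟨(u, v), h⟩ else if h : v < u then x ⟨(v, u), h⟩ else 0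

/-- Degree sequence: `d(γ)_u = ∑_{v ≠ u} γ_{uv}`. -/
def degSeq {n : ℕ} (γ : Edge n → ℤ) (u : Fin n) : ℤ := ∑ v, ent γ u v

/-- Color sequence: `c(γ)_{ij} = ∑ γ_{uv}` over `{u,v} ∈ P` with `{z u, z v} = {i,j}`. -/
def colorSeq {n k : ℕ} (z : Fin n → Fin k) (γ : Edge n → ℤ) (i j : Fin k) : ℤ :=
  ∑ e : Edge n,
    if (z e.1.1 = i ∧ z e.1.2 = j) ∨ (z e.1.1 = j ∧ z e.1.2 = i) then γ e else 0

/-- `γ ∈ ker_ℤ DC_{n,z}`: both the degree sequence and the color sequence vanish. -/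
def inKer {n k : ℕ} (z : Fin n → Fin k) (γ : Edge n → ℤ) : Prop :=
  (∀ u, degSeq γ u = 0) ∧ ∀ i j, colorSeq z γ i j = 0

/-- The 1-norm `‖γ‖₁ = ∑_{e ∈ P} |γ_e|`. -/
def norm1 {n : ℕ} (γ : Edge n → ℤ) : ℤ := ∑ e, |γ e|

/-- The set of moves `M_{n,z} = {γ ∈ ker_ℤ DC_{n,z} : ‖γ‖₁ = 4}`. -/
def MSet {n k : ℕ} (z : Fin n → Fin k) : Set (Edge n → ℤ) :=
  {γ | inKer z γ ∧ norm1 γ = 4}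

/-- Degree sequence of a vector in `ℕ^P`. -/
def degSeqN {n : ℕ} (x : Edge n → ℕ) (u : Fin n) : ℕ := ∑ v, entN x u v

/-- Color sequence of a vector in `ℕ^P`. -/
def colorSeqN {n k : ℕ} (z : Fin n → Fin k) (x : Edge n → ℕ) (i j : Fin k) : ℕ :=
  ∑ e : Edge n,
    if (z e.1.1 = i ∧ z e.1.2 = j) ∨ (z e.1.1 = j ∧ z e.1.2 = i) then x e else 0

/-- The fiber `F(b) = {x ∈ ℕ^P : DC_{n,z} x = b}`, where `b = (d; c)`. -/
def Fiber {n k : ℕ} (z : Fin n → Fin k) (d : Fin n → ℤ) (c : Fin k → Fin k → ℤ) :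
    Set (Edge n → ℕ) :=
  {x | (∀ u, (degSeqN x u : ℤ) = d u) ∧ ∀ i j, (colorSeqN z x i j : ℤ) = c i j}

/-- The simple fiber `F̃(b) = F(b) ∩ {0,1}^P`. -/
def SimpleFiber {n k : ℕ} (z : Fin n → Fin k) (d : Fin n → ℤ) (c : Fin k → Fin k → ℤ) :
    Set (Edge n → ℕ) :=
  {x | x ∈ Fiber z d c ∧ ∀ e, x e ≤ 1}

/-- The difference `x − x' ∈ ℤ^P` of two vectors in `ℕ^P`. -/
def diff {n : ℕ} (x x' : Edge n → ℕ) : Edge n → ℤ := fun e => (x e : ℤ) - (x' e : ℤ)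

section Basics
variable {n k : ℕ}

theorem ent_self (γ : Edge n → ℤ) (u : Fin n) : ent γ u u = 0 := by
  simp [ent]

theorem ent_comm (γ : Edge n → ℤ) (u v : Fin n) : ent γ u v = ent γ v u := by
  unfold ent
  rcases lt_trichotomy u v with h | h | h
  · simp [h, not_lt.2 h.le]
  · simp [h]
  · simp [h, not_lt.2 h.le]

/-- The edge `{u,v}` for `u ≠ v`. -/
noncomputable def mkEdge (u v : Fin n) (h : u ≠ v) : Edge n :=
  if huv : u < v then ⟨(u, v), huv⟩ else ⟨(v, u), by
    rcases lt_or_gt_of_ne h with h' | h'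
    · exact absurd h' huv
    · exact h'⟩

theorem ent_mkEdge (γ : Edge n → ℤ) (u v : Fin n) (h : u ≠ v) :
    ent γ u v = γ (mkEdge u v h) := by
  unfold ent mkEdge
  rcases lt_or_gt_of_ne h with h' | h'
  · simp [h', not_lt.2 h'.le]
  · simp [h', not_lt.2 h'.le]

theorem ent_edge (γ : Edge n → ℤ) (e : Edge n) : ent γ e.1.1 e.1.2 = γ e := by
  have h := e.2
  unfold ent
  simp only [h, dif_pos]

theorem ent_sub (γ δ : Edge n → ℤ) (u v : Fin n) :
    ent (γ - δ) u v = ent γ u v - ent δ u v := by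
  unfold ent; split_ifs <;> simp [Pi.sub_apply]

theorem ent_neg (γ : Edge n → ℤ) (u v : Fin n) :
    ent (-γ) u v = - ent γ u v := by
  unfold ent; split_ifs <;> simp

theorem ent_mono {γ δ : Edge n → ℤ} (h : ∀ e, γ e ≤ δ e) (u v : Fin n) :
    ent γ u v ≤ ent δ u v := by
  unfold ent; split_ifs <;> simp [h _]

/-- cast of an `ℕ`-vector to `ℤ`. -/
def zOf (x : Edge n → ℕ) : Edge n → ℤ := fun e => (x e : ℤ)

theorem ent_zOf_nonneg (x : Edge n → ℕ) (u v : Fin n) : 0 ≤ ent (zOf x) u v := by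
  unfold ent zOf; split_ifs <;> positivity

theorem diff_eq_sub (x x' : Edge n → ℕ) : diff x x' = zOf x - zOf x' := rfl

theorem ent_entN (x : Edge n → ℕ) (u v : Fin n) :
    ent (zOf x) u v = (entN x u v : ℤ) := by
  unfold ent entN zOf; split_ifs <;> simp

end Basics
section Moves
variable {n k : ℕ}

/-- Indicator vector of the unordered pair `{u,v}`. -/
def X (u v : Fin n) : Edge n → ℤ := fun e =>
  if (u = e.1.1 ∧ v = e.1.2) ∨ (v = e.1.1 ∧ u = e.1.2) then 1 else 0

theorem X_eq_indicator {u v : Fin n} (h : u ≠ v) (e : Edge n) :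
    X u v e = if e = mkEdge u v h then 1 else 0 := by
  obtain ⟨⟨p, q⟩, hpq⟩ := e
  rcases lt_or_gt_of_ne h with h' | h'
  · have hmk : mkEdge u v h = ⟨(u, v), h'⟩ := by unfold mkEdge; rw [dif_pos h']
    rw [hmk]
    unfold X
    refine if_congr ?_ rfl rfl
    constructor
    · rintro (⟨rfl, rfl⟩ | ⟨rfl, rfl⟩)
      · rfl
      · exact absurd hpq (not_lt.2 h'.le)
    · intro he
      obtain ⟨rfl, rfl⟩ := Prod.mk.inj (congrArg Subtype.val he)
      exact Or.inl ⟨rfl, rfl⟩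
  · have hmk : mkEdge u v h = ⟨(v, u), h'⟩ := by
      unfold mkEdge; rw [dif_neg (not_lt.2 h'.le)]
    rw [hmk]
    unfold X
    refine if_congr ?_ rfl rfl
    constructor
    · rintro (⟨rfl, rfl⟩ | ⟨rfl, rfl⟩)
      · exact absurd hpq (not_lt.2 h'.le)
      · rfl
    · intro he
      obtain ⟨rfl, rfl⟩ := Prod.mk.inj (congrArg Subtype.val he)
      exact Or.inr ⟨rfl, rfl⟩

theorem ent_X (u v p q : Fin n) (huv : u ≠ v) :
    ent (X u v) p q = if (u = p ∧ v = q) ∨ (u = q ∧ v = p) then 1 else 0 := by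
  unfold ent X
  rcases lt_trichotomy p q with h | h | h
  · simp only [h, dif_pos]
    exact if_congr (by tauto) rfl rfl
  · subst h
    have h2 : ¬ ((u = p ∧ v = p) ∨ (u = p ∧ v = p)) := by
      rintro (⟨rfl, rfl⟩ | ⟨rfl, rfl⟩) <;> exact huv rfl
    simp only [lt_irrefl, dif_neg, not_false_iff]
    rw [if_neg (by tauto)]
  · simp only [not_lt.2 h.le, dif_neg, h, dif_pos, not_false_iff]
    exact if_congr (by tauto) rfl rfl

theorem sum_X {u v : Fin n} (h : u ≠ v) : ∑ e, X u v e = 1 := by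
  rw [Finset.sum_congr rfl (fun e _ => X_eq_indicator h e)]
  simp

/-- The basic move `+e_{ab} + e_{cd} - e_{ac} - e_{bd}`. -/
def mv (a b c d : Fin n) : Edge n → ℤ := fun e =>
  X a b e + X c d e - X a c e - X b d e

theorem ent_mv (a b c d p q : Fin n) (hab : a ≠ b) (hcd : c ≠ d) (hac : a ≠ c)
    (hbd : b ≠ d) :
    ent (mv a b c d) p q =
      (if (a = p ∧ b = q) ∨ (a = q ∧ b = p) then 1 else 0)
      + (if (c = p ∧ d = q) ∨ (c = q ∧ d = p) then 1 else 0)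
      - (if (a = p ∧ c = q) ∨ (a = q ∧ c = p) then 1 else 0)
      - (if (b = p ∧ d = q) ∨ (b = q ∧ d = p) then 1 else 0) := by
  have h1 : mv a b c d = fun e => X a b e + X c d e - X a c e - X b d e := rfl
  unfold ent
  rw [← ent_X a b p q hab, ← ent_X c d p q hcd, ← ent_X a c p q hac,
    ← ent_X b d p q hbd]
  unfold ent
  split_ifs <;> simp [mv]

end Moves
section LinAlg
variable {n k : ℕ} (z : Fin n → Fin k)

theorem degSeq_sub (γ δ : Edge n → ℤ) (u : Fin n) :
    degSeq (γ - δ) u = degSeq γ u - degSeq δ u := by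
  unfold degSeq
  rw [← Finset.sum_sub_distrib]
  exact Finset.sum_congr rfl fun v _ => ent_sub γ δ u v

theorem colorSeq_sub (γ δ : Edge n → ℤ) (i j : Fin k) :
    colorSeq z (γ - δ) i j = colorSeq z γ i j - colorSeq z δ i j := by
  unfold colorSeq
  rw [← Finset.sum_sub_distrib]
  refine Finset.sum_congr rfl fun e _ => ?_
  split_ifs <;> simp [Pi.sub_apply]

theorem degSeq_neg (γ : Edge n → ℤ) (u : Fin n) : degSeq (-γ) u = - degSeq γ u := by
  unfold degSeq
  rw [← Finset.sum_neg_distrib]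
  exact Finset.sum_congr rfl fun v _ => ent_neg γ u v

theorem colorSeq_neg (γ : Edge n → ℤ) (i j : Fin k) :
    colorSeq z (-γ) i j = - colorSeq z γ i j := by
  unfold colorSeq
  rw [← Finset.sum_neg_distrib]
  refine Finset.sum_congr rfl fun e _ => ?_
  split_ifs <;> simp

theorem inKer_neg {γ : Edge n → ℤ} (h : inKer z γ) : inKer z (-γ) := by
  refine ⟨fun u => ?_, fun i j => ?_⟩
  · rw [degSeq_neg, h.1 u, neg_zero]
  · rw [colorSeq_neg, h.2 i j, neg_zero]

theorem degSeqN_cast (x : Edge n → ℕ) (u : Fin n) :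
    (degSeqN x u : ℤ) = degSeq (zOf x) u := by
  unfold degSeqN degSeq
  push_cast
  exact Finset.sum_congr rfl fun v _ => (ent_entN x u v).symm

theorem colorSeqN_cast (x : Edge n → ℕ) (i j : Fin k) :
    (colorSeqN z x i j : ℤ) = colorSeq z (zOf x) i j := by
  unfold colorSeqN colorSeq
  push_cast
  refine Finset.sum_congr rfl fun e _ => ?_
  split_ifs <;> simp [zOf]

theorem inKer_diff {d : Fin n → ℤ} {c : Fin k → Fin k → ℤ} {x x' : Edge n → ℕ}
    (hx : x ∈ Fiber z d c) (hx' : x' ∈ Fiber z d c) : inKer z (diff x x') := by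
  rw [diff_eq_sub]
  refine ⟨fun u => ?_, fun i j => ?_⟩
  · rw [degSeq_sub, ← degSeqN_cast, ← degSeqN_cast, hx.1 u, hx'.1 u, sub_self]
  · rw [colorSeq_sub, ← colorSeqN_cast, ← colorSeqN_cast, hx.2 i j, hx'.2 i j, sub_self]

theorem degSeq_X {u v : Fin n} (h : u ≠ v) (w : Fin n) :
    degSeq (X u v) w = (if w = u then 1 else 0) + (if w = v then 1 else 0) := by
  unfold degSeq
  rw [Finset.sum_congr rfl (fun t _ => ent_X u v w t h)]
  by_cases hu : w = u
  · subst hu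
    have : ∀ t : Fin n, ((w = w ∧ v = t) ∨ (w = t ∧ v = w)) ↔ v = t := by
      intro t
      constructor
      · rintro (⟨-, rfl⟩ | ⟨rfl, hv⟩)
        · rfl
        · exact absurd hv.symm h
      · intro ht; exact Or.inl ⟨rfl, ht⟩
    rw [Finset.sum_congr rfl (fun t _ => if_congr (this t) rfl rfl)]
    simp [Finset.sum_ite_eq, h]
  · by_cases hv : w = v
    · subst hv
      have : ∀ t : Fin n, ((u = w ∧ w = t) ∨ (u = t ∧ w = w)) ↔ u = t := by
        intro t
        constructor
        · rintro (⟨hu', -⟩ | ⟨rfl, -⟩)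
          · exact absurd hu'.symm hu
          · rfl
        · intro ht; exact Or.inr ⟨ht, rfl⟩
      rw [Finset.sum_congr rfl (fun t _ => if_congr (this t) rfl rfl)]
      simp [Finset.sum_ite_eq, hu]
    · have : ∀ t : Fin n, ¬ ((u = w ∧ v = t) ∨ (u = t ∧ v = w)) := by
        rintro t (⟨rfl, -⟩ | ⟨-, rfl⟩)
        · exact hu rfl
        · exact hv rfl
      rw [Finset.sum_congr rfl (fun t _ => if_neg (this t))]
      simp [hu, hv]

theorem colorSeq_X {u v : Fin n} (h : u ≠ v) (i j : Fin k) :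
    colorSeq z (X u v) i j =
      if (z u = i ∧ z v = j) ∨ (z u = j ∧ z v = i) then 1 else 0 := by
  unfold colorSeq
  have hrw : ∀ e : Edge n,
      (if (z e.1.1 = i ∧ z e.1.2 = j) ∨ (z e.1.1 = j ∧ z e.1.2 = i) then X u v e else 0)
      = if e = mkEdge u v h then
          (if (z e.1.1 = i ∧ z e.1.2 = j) ∨ (z e.1.1 = j ∧ z e.1.2 = i) then 1 else 0)
        else 0 := by
    intro e
    rw [X_eq_indicator h e]
    split_ifs <;> simp
  rw [Finset.sum_congr rfl (fun e _ => hrw e)]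
  rw [Finset.sum_ite_eq' Finset.univ (mkEdge u v h)
    (fun e => if (z e.1.1 = i ∧ z e.1.2 = j) ∨ (z e.1.1 = j ∧ z e.1.2 = i) then (1:ℤ) else 0)]
  rw [if_pos (Finset.mem_univ _)]
  refine if_congr ?_ rfl rfl
  unfold mkEdge
  rcases lt_or_gt_of_ne h with h' | h'
  · rw [dif_pos h']
  · rw [dif_neg (not_lt.2 h'.le)]
    dsimp only
    tauto

end LinAlg
section MvFacts
variable {n k : ℕ} (z : Fin n → Fin k)

theorem ent_add (γ δ : Edge n → ℤ) (u v : Fin n) :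
    ent (γ + δ) u v = ent γ u v + ent δ u v := by
  unfold ent; split_ifs <;> simp [Pi.add_apply]

theorem degSeq_add (γ δ : Edge n → ℤ) (u : Fin n) :
    degSeq (γ + δ) u = degSeq γ u + degSeq δ u := by
  unfold degSeq
  rw [← Finset.sum_add_distrib]
  exact Finset.sum_congr rfl fun v _ => ent_add γ δ u v

theorem colorSeq_add (γ δ : Edge n → ℤ) (i j : Fin k) :
    colorSeq z (γ + δ) i j = colorSeq z γ i j + colorSeq z δ i j := by
  unfold colorSeq
  rw [← Finset.sum_add_distrib]
  refine Finset.sum_congr rfl fun e _ => ?_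
  split_ifs <;> simp [Pi.add_apply]

theorem mv_eq (a b c d : Fin n) :
    mv a b c d = (X a b + X c d) - (X a c + X b d) := by
  funext e
  simp [mv, Pi.sub_apply, Pi.add_apply]
  ring

theorem degSeq_mv {a b c d : Fin n} (hab : a ≠ b) (hcd : c ≠ d) (hac : a ≠ c)
    (hbd : b ≠ d) (w : Fin n) : degSeq (mv a b c d) w = 0 := by
  rw [mv_eq, degSeq_sub, degSeq_add, degSeq_add, degSeq_X hab, degSeq_X hcd,
    degSeq_X hac, degSeq_X hbd]
  ring

theorem colorSeq_mv {a b c d : Fin n} (hab : a ≠ b) (hcd : c ≠ d) (hac : a ≠ c)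
    (hbd : b ≠ d) (hz : z b = z c ∨ z a = z d) (i j : Fin k) :
    colorSeq z (mv a b c d) i j = 0 := by
  rw [mv_eq, colorSeq_sub, colorSeq_add, colorSeq_add, colorSeq_X z hab,
    colorSeq_X z hcd, colorSeq_X z hac, colorSeq_X z hbd]
  rcases hz with hz | hz
  · rw [hz]; ring
  · rw [hz]
    have e1 : ((z d = i ∧ z b = j) ∨ (z d = j ∧ z b = i)) ↔
        ((z b = i ∧ z d = j) ∨ (z b = j ∧ z d = i)) := by tauto
    have e2 : ((z c = i ∧ z d = j) ∨ (z c = j ∧ z d = i)) ↔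
        ((z d = i ∧ z c = j) ∨ (z d = j ∧ z c = i)) := by tauto
    rw [if_congr e1 rfl rfl, if_congr e2 rfl rfl]
    ring

theorem inKer_mv {a b c d : Fin n} (hab : a ≠ b) (hcd : c ≠ d) (hac : a ≠ c)
    (hbd : b ≠ d) (hz : z b = z c ∨ z a = z d) : inKer z (mv a b c d) :=
  ⟨degSeq_mv hab hcd hac hbd, colorSeq_mv z hab hcd hac hbd hz⟩

theorem X_mkEdge (u v p q : Fin n) (h' : p ≠ q) :
    X u v (mkEdge p q h') = if (u = p ∧ v = q) ∨ (u = q ∧ v = p) then 1 else 0 := by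
  unfold mkEdge
  rcases lt_or_gt_of_ne h' with hlt | hlt
  · rw [dif_pos hlt]
    exact if_congr (by tauto) rfl rfl
  · rw [dif_neg (not_lt.2 hlt.le)]
    exact if_congr (by tauto) rfl rfl

theorem mkEdge_ne {u v p q : Fin n} (h : u ≠ v) (h' : p ≠ q)
    (hne : ¬ ((u = p ∧ v = q) ∨ (u = q ∧ v = p))) :
    mkEdge u v h ≠ mkEdge p q h' := by
  intro heq
  have h1 : X u v (mkEdge p q h') = 1 := by
    rw [X_eq_indicator h, ← heq, if_pos rfl]
  rw [X_mkEdge, if_neg hne] at h1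
  exact absurd h1 (by norm_num)

end MvFacts
section Norms
variable {n k : ℕ}

theorem norm1_nonneg (γ : Edge n → ℤ) : 0 ≤ norm1 γ :=
  Finset.sum_nonneg fun e _ => abs_nonneg _

theorem norm1_neg (γ : Edge n → ℤ) : norm1 (-γ) = norm1 γ := by
  unfold norm1
  exact Finset.sum_congr rfl fun e _ => abs_neg _

theorem norm1_eq_zero {γ : Edge n → ℤ} (h : norm1 γ = 0) : γ = 0 := by
  funext e
  have := (Finset.sum_eq_zero_iff_of_nonneg (fun e _ => abs_nonneg (γ e))).1 h e
    (Finset.mem_univ e)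
  simpa using this

theorem pair_ne {u v p q : Fin n} (h1 : u ≠ p ∨ v ≠ q) (h2 : u ≠ q ∨ v ≠ p) :
    ¬ ((u = p ∧ v = q) ∨ (u = q ∧ v = p)) := by
  rintro (⟨e1, e2⟩ | ⟨e1, e2⟩)
  · rcases h1 with h | h
    · exact h e1
    · exact h e2
  · rcases h2 with h | h
    · exact h e1
    · exact h e2

variable {a b c d : Fin n}

theorem norm1_mv (hab : a ≠ b) (hcd : c ≠ d) (hac : a ≠ c) (hbd : b ≠ d)
    (had : a ≠ d) (hbc : b ≠ c) : norm1 (mv a b c d) = 4 := by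
  have habs : ∀ e, |mv a b c d e| = X a b e + X c d e + X a c e + X b d e := by
    intro e
    have hE12 : mkEdge a b hab ≠ mkEdge c d hcd :=
      mkEdge_ne _ _ (pair_ne (Or.inl hac) (Or.inl had))
    have hE13 : mkEdge a b hab ≠ mkEdge a c hac :=
      mkEdge_ne _ _ (pair_ne (Or.inr hbc) (Or.inl hac))
    have hE14 : mkEdge a b hab ≠ mkEdge b d hbd :=
      mkEdge_ne _ _ (pair_ne (Or.inl hab) (Or.inl had))
    have hE23 : mkEdge c d hcd ≠ mkEdge a c hac :=
      mkEdge_ne _ _ (pair_ne (Or.inl hac.symm) (Or.inr had.symm))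
    have hE24 : mkEdge c d hcd ≠ mkEdge b d hbd :=
      mkEdge_ne _ _ (pair_ne (Or.inl hbc.symm) (Or.inl hcd))
    have hE34 : mkEdge a c hac ≠ mkEdge b d hbd :=
      mkEdge_ne _ _ (pair_ne (Or.inl hab) (Or.inl had))
    unfold mv
    rw [X_eq_indicator hab e, X_eq_indicator hcd e, X_eq_indicator hac e,
      X_eq_indicator hbd e]
    by_cases h1 : e = mkEdge a b hab
    · subst h1; simp [hE12, hE13, hE14]
    · by_cases h2 : e = mkEdge c d hcd
      · subst h2; simp [Ne.symm hE12, hE23, hE24]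
      · by_cases h3 : e = mkEdge a c hac
        · subst h3; simp [Ne.symm hE13, Ne.symm hE23, hE34]
        · by_cases h4 : e = mkEdge b d hbd
          · subst h4; simp [Ne.symm hE14, Ne.symm hE24, Ne.symm hE34]
          · simp [h1, h2, h3, h4]
  unfold norm1
  rw [Finset.sum_congr rfl fun e _ => habs e]
  rw [Finset.sum_add_distrib, Finset.sum_add_distrib, Finset.sum_add_distrib,
    sum_X hab, sum_X hcd, sum_X hac, sum_X hbd]
  norm_num

theorem mem_MSet (z : Fin n → Fin k) (hab : a ≠ b) (hcd : c ≠ d) (hac : a ≠ c)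
    (hbd : b ≠ d) (had : a ≠ d) (hbc : b ≠ c) (hz : z b = z c ∨ z a = z d) :
    mv a b c d ∈ MSet z :=
  ⟨inKer_mv z hab hcd hac hbd hz, norm1_mv hab hcd hac hbd had hbc⟩

set_option maxHeartbeats 1600000 in
theorem norm1_sub_mv (γ : Edge n → ℤ) (hab : a ≠ b) (hcd : c ≠ d) (hac : a ≠ c)
    (hbd : b ≠ d) (had : a ≠ d) (hbc : b ≠ c)
    (h1 : 1 ≤ ent γ a b) (h2 : 1 ≤ ent γ c d) :
    norm1 (γ - mv a b c d) = norm1 γ - 2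
      + (|ent γ a c + 1| - |ent γ a c|) + (|ent γ b d + 1| - |ent γ b d|) := by
  have hE12 : mkEdge a b hab ≠ mkEdge c d hcd :=
    mkEdge_ne _ _ (pair_ne (Or.inl hac) (Or.inl had))
  have hE13 : mkEdge a b hab ≠ mkEdge a c hac :=
    mkEdge_ne _ _ (pair_ne (Or.inr hbc) (Or.inl hac))
  have hE14 : mkEdge a b hab ≠ mkEdge b d hbd :=
    mkEdge_ne _ _ (pair_ne (Or.inl hab) (Or.inl had))
  have hE23 : mkEdge c d hcd ≠ mkEdge a c hac :=
    mkEdge_ne _ _ (pair_ne (Or.inl hac.symm) (Or.inr had.symm))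
  have hE24 : mkEdge c d hcd ≠ mkEdge b d hbd :=
    mkEdge_ne _ _ (pair_ne (Or.inl hbc.symm) (Or.inl hcd))
  have hE34 : mkEdge a c hac ≠ mkEdge b d hbd :=
    mkEdge_ne _ _ (pair_ne (Or.inl hab) (Or.inl had))
  set s : Finset (Edge n) :=
    insert (mkEdge a b hab) (insert (mkEdge c d hcd)
      (insert (mkEdge a c hac) {mkEdge b d hbd})) with hs
  have hkey : norm1 (γ - mv a b c d) - norm1 γ
      = ∑ e ∈ s, (|(γ - mv a b c d) e| - |γ e|) := by
    unfold norm1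
    rw [← Finset.sum_sub_distrib]
    refine (Finset.sum_subset (Finset.subset_univ s) ?_).symm
    intro e _ he
    rw [hs] at he
    simp only [Finset.mem_insert, Finset.mem_singleton, not_or] at he
    have hm : mv a b c d e = 0 := by
      unfold mv
      rw [X_eq_indicator hab e, X_eq_indicator hcd e, X_eq_indicator hac e,
        X_eq_indicator hbd e, if_neg he.1, if_neg he.2.1, if_neg he.2.2.1,
        if_neg he.2.2.2]
      ring
    simp [Pi.sub_apply, hm]
  have hsum : ∑ e ∈ s, (|(γ - mv a b c d) e| - |γ e|)
      = (|(γ - mv a b c d) (mkEdge a b hab)| - |γ (mkEdge a b hab)|)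
      + ((|(γ - mv a b c d) (mkEdge c d hcd)| - |γ (mkEdge c d hcd)|)
      + ((|(γ - mv a b c d) (mkEdge a c hac)| - |γ (mkEdge a c hac)|)
      + (|(γ - mv a b c d) (mkEdge b d hbd)| - |γ (mkEdge b d hbd)|))) := by
    rw [hs]
    rw [Finset.sum_insert (by simp [hE12, hE13, hE14]),
      Finset.sum_insert (by simp [hE23, hE24]),
      Finset.sum_insert (by simp [hE34]), Finset.sum_singleton]
  have hm1 : mv a b c d (mkEdge a b hab) = 1 := by
    have w1 : X a b (mkEdge a b hab) = 1 := by
      rw [X_mkEdge]; exact if_pos (Or.inl ⟨rfl, rfl⟩)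
    have w2 : X c d (mkEdge a b hab) = 0 := by
      rw [X_mkEdge]; exact if_neg (pair_ne (Or.inl hac.symm) (Or.inl hbc.symm))
    have w3 : X a c (mkEdge a b hab) = 0 := by
      rw [X_mkEdge]; exact if_neg (pair_ne (Or.inr hbc.symm) (Or.inl hab))
    have w4 : X b d (mkEdge a b hab) = 0 := by
      rw [X_mkEdge]; exact if_neg (pair_ne (Or.inl hab.symm) (Or.inr had.symm))
    simp only [mv, w1, w2, w3, w4]; ring
  have hm2 : mv a b c d (mkEdge c d hcd) = 1 := by
    have w1 : X a b (mkEdge c d hcd) = 0 := by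
      rw [X_mkEdge]; exact if_neg (pair_ne (Or.inl hac) (Or.inl had))
    have w2 : X c d (mkEdge c d hcd) = 1 := by
      rw [X_mkEdge]; exact if_pos (Or.inl ⟨rfl, rfl⟩)
    have w3 : X a c (mkEdge c d hcd) = 0 := by
      rw [X_mkEdge]; exact if_neg (pair_ne (Or.inl hac) (Or.inl had))
    have w4 : X b d (mkEdge c d hcd) = 0 := by
      rw [X_mkEdge]; exact if_neg (pair_ne (Or.inl hbc) (Or.inl hbd))
    simp only [mv, w1, w2, w3, w4]; ring
  have hm3 : mv a b c d (mkEdge a c hac) = -1 := by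
    have w1 : X a b (mkEdge a c hac) = 0 := by
      rw [X_mkEdge]; exact if_neg (pair_ne (Or.inr hbc) (Or.inl hac))
    have w2 : X c d (mkEdge a c hac) = 0 := by
      rw [X_mkEdge]; exact if_neg (pair_ne (Or.inl hac.symm) (Or.inr had.symm))
    have w3 : X a c (mkEdge a c hac) = 1 := by
      rw [X_mkEdge]; exact if_pos (Or.inl ⟨rfl, rfl⟩)
    have w4 : X b d (mkEdge a c hac) = 0 := by
      rw [X_mkEdge]; exact if_neg (pair_ne (Or.inl hab.symm) (Or.inl hbc))
    simp only [mv, w1, w2, w3, w4]; ring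
  have hm4 : mv a b c d (mkEdge b d hbd) = -1 := by
    have w1 : X a b (mkEdge b d hbd) = 0 := by
      rw [X_mkEdge]; exact if_neg (pair_ne (Or.inl hab) (Or.inl had))
    have w2 : X c d (mkEdge b d hbd) = 0 := by
      rw [X_mkEdge]; exact if_neg (pair_ne (Or.inl hbc.symm) (Or.inl hcd))
    have w3 : X a c (mkEdge b d hbd) = 0 := by
      rw [X_mkEdge]; exact if_neg (pair_ne (Or.inl hab) (Or.inl had))
    have w4 : X b d (mkEdge b d hbd) = 1 := by
      rw [X_mkEdge]; exact if_pos (Or.inl ⟨rfl, rfl⟩)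
    simp only [mv, w1, w2, w3, w4]; ring
  have hg1 : γ (mkEdge a b hab) = ent γ a b := (ent_mkEdge γ a b hab).symm
  have hg2 : γ (mkEdge c d hcd) = ent γ c d := (ent_mkEdge γ c d hcd).symm
  have hg3 : γ (mkEdge a c hac) = ent γ a c := (ent_mkEdge γ a c hac).symm
  have hg4 : γ (mkEdge b d hbd) = ent γ b d := (ent_mkEdge γ b d hbd).symm
  rw [hsum] at hkey
  simp only [Pi.sub_apply, hm1, hm2, hm3, hm4, hg1, hg2, hg3, hg4] at hkey
  have e1 : |ent γ a b - 1| - |ent γ a b| = -1 := by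
    rw [abs_of_nonneg (by omega), abs_of_pos (by omega)]; ring
  have e2 : |ent γ c d - 1| - |ent γ c d| = -1 := by
    rw [abs_of_nonneg (by omega), abs_of_pos (by omega)]; ring
  have e3 : ent γ a c - -1 = ent γ a c + 1 := by ring
  have e4 : ent γ b d - -1 = ent γ b d + 1 := by ring
  rw [e3, e4] at hkey
  omega

theorem abs_succ_le (t : ℤ) : |t + 1| - |t| ≤ 1 := by
  rcases le_or_gt 0 t with h | h
  · rw [abs_of_nonneg (by omega), abs_of_nonneg h]; omega
  · rw [abs_of_nonpos (by omega), abs_of_neg h]; omega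

theorem abs_succ_of_neg {t : ℤ} (h : t ≤ -1) : |t + 1| - |t| = -1 := by
  rw [abs_of_nonpos (by omega), abs_of_neg (by omega)]; omega

end Norms
section EntMv
variable {n k : ℕ} {a b c d : Fin n}

theorem ent_mv_ab (γ : Edge n → ℤ) (hab : a ≠ b) (hcd : c ≠ d) (hac : a ≠ c)
    (hbd : b ≠ d) (had : a ≠ d) (hbc : b ≠ c) : ent (mv a b c d) a b = 1 := by
  rw [ent_mv a b c d a b hab hcd hac hbd,
    if_pos (Or.inl ⟨rfl, rfl⟩),
    if_neg (pair_ne (Or.inl hac.symm) (Or.inl hbc.symm)),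
    if_neg (pair_ne (Or.inr hbc.symm) (Or.inl hab)),
    if_neg (pair_ne (Or.inl hab.symm) (Or.inr had.symm))]
  ring

theorem ent_mv_cd (γ : Edge n → ℤ) (hab : a ≠ b) (hcd : c ≠ d) (hac : a ≠ c)
    (hbd : b ≠ d) (had : a ≠ d) (hbc : b ≠ c) : ent (mv a b c d) c d = 1 := by
  rw [ent_mv a b c d c d hab hcd hac hbd,
    if_neg (pair_ne (Or.inl hac) (Or.inl had)),
    if_pos (Or.inl ⟨rfl, rfl⟩),
    if_neg (pair_ne (Or.inl hac) (Or.inl had)),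
    if_neg (pair_ne (Or.inl hbc) (Or.inl hbd))]
  ring

theorem ent_mv_ac (γ : Edge n → ℤ) (hab : a ≠ b) (hcd : c ≠ d) (hac : a ≠ c)
    (hbd : b ≠ d) (had : a ≠ d) (hbc : b ≠ c) : ent (mv a b c d) a c = -1 := by
  rw [ent_mv a b c d a c hab hcd hac hbd,
    if_neg (pair_ne (Or.inr hbc) (Or.inl hac)),
    if_neg (pair_ne (Or.inl hac.symm) (Or.inr had.symm)),
    if_pos (Or.inl ⟨rfl, rfl⟩),
    if_neg (pair_ne (Or.inl hab.symm) (Or.inl hbc))]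
  ring

theorem ent_mv_bd (γ : Edge n → ℤ) (hab : a ≠ b) (hcd : c ≠ d) (hac : a ≠ c)
    (hbd : b ≠ d) (had : a ≠ d) (hbc : b ≠ c) : ent (mv a b c d) b d = -1 := by
  rw [ent_mv a b c d b d hab hcd hac hbd,
    if_neg (pair_ne (Or.inl hab) (Or.inl had)),
    if_neg (pair_ne (Or.inl hbc.symm) (Or.inl hcd)),
    if_neg (pair_ne (Or.inl hab) (Or.inl had)),
    if_pos (Or.inl ⟨rfl, rfl⟩)]
  ring

theorem ent_mv_zero (p q : Fin n) (hab : a ≠ b) (hcd : c ≠ d) (hac : a ≠ c)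
    (hbd : b ≠ d)
    (n1 : ¬ ((a = p ∧ b = q) ∨ (a = q ∧ b = p)))
    (n2 : ¬ ((c = p ∧ d = q) ∨ (c = q ∧ d = p)))
    (n3 : ¬ ((a = p ∧ c = q) ∨ (a = q ∧ c = p)))
    (n4 : ¬ ((b = p ∧ d = q) ∨ (b = q ∧ d = p))) :
    ent (mv a b c d) p q = 0 := by
  rw [ent_mv a b c d p q hab hcd hac hbd, if_neg n1, if_neg n2, if_neg n3, if_neg n4]
  ring

theorem norm1_sub_mv_le (γ : Edge n → ℤ) (hab : a ≠ b) (hcd : c ≠ d) (hac : a ≠ c)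
    (hbd : b ≠ d) (had : a ≠ d) (hbc : b ≠ c)
    (h1 : 1 ≤ ent γ a b) (h2 : 1 ≤ ent γ c d) :
    norm1 (γ - mv a b c d) ≤ norm1 γ := by
  rw [norm1_sub_mv γ hab hcd hac hbd had hbc h1 h2]
  have := abs_succ_le (ent γ a c)
  have := abs_succ_le (ent γ b d)
  omega

theorem norm1_sub_mv_dec (γ : Edge n → ℤ) (hab : a ≠ b) (hcd : c ≠ d) (hac : a ≠ c)
    (hbd : b ≠ d) (had : a ≠ d) (hbc : b ≠ c)
    (h1 : 1 ≤ ent γ a b) (h2 : 1 ≤ ent γ c d)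
    (h3 : ent γ a c ≤ -1 ∨ ent γ b d ≤ -1) :
    norm1 (γ - mv a b c d) ≤ norm1 γ - 2 := by
  rw [norm1_sub_mv γ hab hcd hac hbd had hbc h1 h2]
  rcases h3 with h3 | h3
  · have := abs_succ_of_neg h3
    have := abs_succ_le (ent γ b d)
    omega
  · have := abs_succ_of_neg h3
    have := abs_succ_le (ent γ a c)
    omega

end EntMv

section Exists
variable {n k : ℕ} {z : Fin n → Fin k}

/-- From a vanishing degree and a negative entry, find a positive entry. -/
theorem find_pos {γ : Edge n → ℤ} (hdeg : degSeq γ u = 0) {v : Fin n}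
    (hneg : ent γ u v ≤ -1) : ∃ t, 1 ≤ ent γ u t ∧ t ≠ u ∧ t ≠ v := by
  by_contra hcon
  push_neg at hcon
  have hall : ∀ t : Fin n, ent γ u t ≤ if t = v then ent γ u v else 0 := by
    intro t
    by_cases ht : t = v
    · subst ht; simp
    · rw [if_neg ht]
      by_contra h
      push_neg at h
      have h1 : 1 ≤ ent γ u t := h
      have := hcon t h1
      rcases eq_or_ne t u with rfl | htu
      · rw [ent_self] at h1; omega
      · exact ht (this htu)
  have hsum : degSeq γ u ≤ ∑ t, if t = v then ent γ u v else 0 :=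
    Finset.sum_le_sum fun t _ => hall t
  rw [Finset.sum_ite_eq' Finset.univ v (fun _ => ent γ u v), if_pos (Finset.mem_univ v)]
    at hsum
  omega

theorem find_neg {γ : Edge n → ℤ} (hdeg : degSeq γ u = 0) {v : Fin n}
    (hpos : 1 ≤ ent γ u v) : ∃ t, ent γ u t ≤ -1 ∧ t ≠ u ∧ t ≠ v := by
  have hdeg' : degSeq (-γ) u = 0 := by rw [degSeq_neg, hdeg, neg_zero]
  have hneg : ent (-γ) u v ≤ -1 := by rw [ent_neg]; omega
  obtain ⟨t, ht, h1, h2⟩ := find_pos hdeg' hneg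
  rw [ent_neg] at ht
  exact ⟨t, by omega, h1, h2⟩

/-- Color condition at an edge as a symmetric statement. -/
theorem color_cond_mkEdge (z : Fin n → Fin k) {u v : Fin n} (h : u ≠ v) (i j : Fin k) :
    ((z (mkEdge u v h).1.1 = i ∧ z (mkEdge u v h).1.2 = j) ∨
     (z (mkEdge u v h).1.1 = j ∧ z (mkEdge u v h).1.2 = i)) ↔
    ((z u = i ∧ z v = j) ∨ (z u = j ∧ z v = i)) := by
  unfold mkEdge
  rcases lt_or_gt_of_ne h with h' | h'
  · rw [dif_pos h']
  · rw [dif_neg (not_lt.2 h'.le)]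
    dsimp only
    tauto

/-- From a vanishing color sum and a positive entry, find a negative entry with the
same color pair. -/
theorem color_find {γ : Edge n → ℤ} {a b : Fin n} (hab : a ≠ b)
    (hcol : colorSeq z γ (z a) (z b) = 0) (hpos : 1 ≤ ent γ a b) :
    ∃ u v, u ≠ v ∧ ent γ u v ≤ -1 ∧ z u = z a ∧ z v = z b := by
  set i := z a with hi
  set j := z b with hj
  by_contra hcon
  push_neg at hcon
  have hall : ∀ e : Edge n,
      (if e = mkEdge a b hab then (1:ℤ) else 0) ≤
      (if (z e.1.1 = i ∧ z e.1.2 = j) ∨ (z e.1.1 = j ∧ z e.1.2 = i) then γ e else 0) := by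
    intro e
    by_cases hc : (z e.1.1 = i ∧ z e.1.2 = j) ∨ (z e.1.1 = j ∧ z e.1.2 = i)
    · rw [if_pos hc]
      have hne : e.1.1 ≠ e.1.2 := ne_of_lt e.2
      have hent : ent γ e.1.1 e.1.2 = γ e := ent_edge γ e
      have hγ : 1 ≤ γ e ∨ 0 ≤ γ e := by
        rcases hc with ⟨h1, h2⟩ | ⟨h1, h2⟩
        · by_contra hcc
          push_neg at hcc
          have : ent γ e.1.1 e.1.2 ≤ -1 := by omega
          exact absurd h2 (hcon e.1.1 e.1.2 hne this h1)
        · by_contra hcc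
          push_neg at hcc
          have h3 : ent γ e.1.2 e.1.1 ≤ -1 := by rw [ent_comm]; omega
          exact absurd h1 (hcon e.1.2 e.1.1 (Ne.symm hne) h3 h2)
      by_cases he : e = mkEdge a b hab
      · rw [if_pos he]
        subst he
        rwa [← ent_mkEdge γ a b hab]
      · rw [if_neg he]; omega
    · rw [if_neg hc]
      by_cases he : e = mkEdge a b hab
      · exfalso
        subst he
        exact hc (((color_cond_mkEdge z hab i j).2 (Or.inl ⟨hi.symm, hj.symm⟩)))
      · rw [if_neg he]
  have hsum : (∑ e : Edge n, if e = mkEdge a b hab then (1:ℤ) else 0) ≤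
      colorSeq z γ i j := Finset.sum_le_sum fun e _ => hall e
  rw [Finset.sum_ite_eq' Finset.univ (mkEdge a b hab) (fun _ => (1:ℤ)),
    if_pos (Finset.mem_univ _)] at hsum
  rw [hcol] at hsum  -- hcol : colorSeq z γ i j = 0?
  omega

/-- A nonzero kernel element has a positive entry. -/
theorem exists_pos_entry {γ : Edge n → ℤ} (hker : inKer z γ) (hne : γ ≠ 0) :
    ∃ a b, a ≠ b ∧ 1 ≤ ent γ a b := by
  have : ∃ e : Edge n, γ e ≠ 0 := by
    by_contra h
    push_neg at h
    exact hne (funext fun e => h e)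
  obtain ⟨e, he⟩ := this
  have hne' : e.1.1 ≠ e.1.2 := ne_of_lt e.2
  have hent : ent γ e.1.1 e.1.2 = γ e := ent_edge γ e
  rcases lt_or_gt_of_ne he with h | h
  · have hneg : ent γ e.1.1 e.1.2 ≤ -1 := by omega
    obtain ⟨t, ht, htu, htv⟩ := find_pos (hker.1 e.1.1) hneg
    exact ⟨e.1.1, t, Ne.symm htu, ht⟩
  · exact ⟨e.1.1, e.1.2, hne', by omega⟩

end Exists
section Apply
variable {n k : ℕ} {z : Fin n → Fin k} {d : Fin n → ℤ} {c : Fin k → Fin k → ℤ}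

theorem apply_move {x : Edge n → ℕ} (hx : x ∈ Fiber z d c) (m : Edge n → ℤ)
    (hker : inKer z m) (hle : ∀ e, m e ≤ (x e : ℤ)) :
    ∃ y : Edge n → ℕ, y ∈ Fiber z d c ∧ diff x y = m := by
  refine ⟨fun e => ((x e : ℤ) - m e).toNat, ?_, ?_⟩
  · have hz : zOf (fun e => ((x e : ℤ) - m e).toNat) = zOf x - m := by
      funext e
      have : (0:ℤ) ≤ (x e : ℤ) - m e := by have := hle e; omega
      simp [zOf, Int.toNat_of_nonneg this]
    constructor
    · intro u
      rw [degSeqN_cast, hz, degSeq_sub, ← degSeqN_cast, hx.1 u, hker.1 u, sub_zero]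
    · intro i j
      rw [colorSeqN_cast, hz, colorSeq_sub, ← colorSeqN_cast, hx.2 i j, hker.2 i j,
        sub_zero]
  · funext e
    have : (0:ℤ) ≤ (x e : ℤ) - m e := by have := hle e; omega
    simp [diff, Int.toNat_of_nonneg this]

theorem X_nonneg (u v : Fin n) (e : Edge n) : 0 ≤ X u v e := by
  unfold X; split_ifs <;> norm_num

theorem mv_le_of_ent {x x' : Edge n → ℕ} {a b c' d' : Fin n}
    (hab : a ≠ b) (hcd : c' ≠ d') (hac : a ≠ c') (hbd : b ≠ d') (had : a ≠ d')
    (hbc : b ≠ c')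
    (h1 : 1 ≤ ent (diff x x') a b) (h2 : 1 ≤ ent (diff x x') c' d') :
    ∀ e, mv a b c' d' e ≤ (x e : ℤ) := by
  intro e
  have hd1 : ent (diff x x') a b ≤ ent (zOf x) a b :=
    ent_mono (fun e => by simp only [diff, zOf]; omega) a b
  have hd2 : ent (diff x x') c' d' ≤ ent (zOf x) c' d' :=
    ent_mono (fun e => by simp only [diff, zOf]; omega) c' d'
  have hEne : mkEdge a b hab ≠ mkEdge c' d' hcd :=
    mkEdge_ne _ _ (pair_ne (Or.inl hac) (Or.inl had))
  have h3 : 0 ≤ X a c' e := X_nonneg _ _ _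
  have h4 : 0 ≤ X b d' e := X_nonneg _ _ _
  by_cases he1 : e = mkEdge a b hab
  · subst he1
    have hx1 : (1:ℤ) ≤ x (mkEdge a b hab) := by
      have he : ent (zOf x) a b = (x (mkEdge a b hab) : ℤ) := ent_mkEdge (zOf x) a b hab
      omega
    have : X c' d' (mkEdge a b hab) = 0 := by
      rw [X_eq_indicator hcd, if_neg hEne]
    have h5 : X a b (mkEdge a b hab) = 1 := by
      rw [X_eq_indicator hab, if_pos rfl]
    unfold mv
    rw [h5, this]
    omega
  · by_cases he2 : e = mkEdge c' d' hcd
    · subst he2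
      have hx1 : (1:ℤ) ≤ x (mkEdge c' d' hcd) := by
        have he : ent (zOf x) c' d' = (x (mkEdge c' d' hcd) : ℤ) :=
          ent_mkEdge (zOf x) c' d' hcd
        omega
      have h6 : X a b (mkEdge c' d' hcd) = 0 := by
        rw [X_eq_indicator hab, if_neg (Ne.symm hEne)]
      have h5 : X c' d' (mkEdge c' d' hcd) = 1 := by
        rw [X_eq_indicator hcd, if_pos rfl]
      unfold mv
      rw [h5, h6]
      omega
    · have h6 : X a b e = 0 := by rw [X_eq_indicator hab, if_neg he1]
      have h5 : X c' d' e = 0 := by rw [X_eq_indicator hcd, if_neg he2]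
      unfold mv
      rw [h5, h6]
      have : (0:ℤ) ≤ (x e : ℤ) := by positivity
      omega

end Apply
section GoodStep
variable {n k : ℕ} {z : Fin n → Fin k} {d : Fin n → ℤ} {c : Fin k → Fin k → ℤ}

/-- A "good" configuration: a vertex with a positive edge and a negative edge toward
endpoints of the same color. -/
def Good (z : Fin n → Fin k) (γ : Edge n → ℤ) : Prop :=
  ∃ a b c, a ≠ b ∧ a ≠ c ∧ b ≠ c ∧ 1 ≤ ent γ a b ∧ ent γ a c ≤ -1 ∧ z b = z c

theorem good_neg {γ : Edge n → ℤ} (h : Good z γ) : Good z (-γ) := by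
  obtain ⟨a, b, c, hab, hac, hbc, h1, h2, hz⟩ := h
  exact ⟨a, c, b, hac, hab, hbc.symm, by rw [ent_neg]; omega, by rw [ent_neg]; omega,
    hz.symm⟩

theorem diff_trans (x y x' : Edge n → ℕ) : diff y x' = diff x x' - diff x y := by
  funext e
  simp only [diff, Pi.sub_apply]
  ring

theorem diff_comm (x x' : Edge n → ℕ) : diff x' x = -(diff x x') := by
  funext e
  simp only [diff, Pi.neg_apply]
  ring

theorem diff_zero_eq {x x' : Edge n → ℕ} (h : diff x x' = 0) : x = x' := by
  funext e
  have := congrFun h e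
  simp only [diff, Pi.zero_apply, sub_eq_zero] at this
  exact_mod_cast this

theorem dec_half {x x' : Edge n → ℕ} (hx : x ∈ Fiber z d c) (hx' : x' ∈ Fiber z d c)
    {a b cc : Fin n} (hab : a ≠ b) (hac : a ≠ cc) (hbc : b ≠ cc)
    (h1 : 1 ≤ ent (diff x x') a b) (h2 : ent (diff x x') a cc ≤ -1)
    (hz : z b = z cc) (h3 : ent (diff x x') b cc ≤ 0) :
    ∃ y ∈ Fiber z d c, diff x y ∈ MSet z ∧
      norm1 (diff y x') ≤ norm1 (diff x x') - 2 := by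
  set γ := diff x x' with hγ
  have hker : inKer z γ := inKer_diff z hx hx'
  have h2' : ent γ cc a ≤ -1 := by rw [ent_comm]; exact h2
  obtain ⟨dd, hd1, hdc, hda⟩ := find_pos (hker.1 cc) h2'
  have hdb : dd ≠ b := by
    intro h
    subst h
    rw [ent_comm] at hd1
    omega
  -- move : mv a b cc dd  (plus ab, cc-dd ; minus a-cc, b-dd)
  have hcd : cc ≠ dd := Ne.symm hdc
  have hbd : b ≠ dd := Ne.symm hdb
  have had : a ≠ dd := Ne.symm hda
  have hmem : mv a b cc dd ∈ MSet z :=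
    mem_MSet z hab hcd hac hbd had hbc (Or.inl hz)
  obtain ⟨y, hy, hdiff⟩ := apply_move hx (mv a b cc dd) hmem.1
    (mv_le_of_ent hab hcd hac hbd had hbc h1 hd1)
  refine ⟨y, hy, by rw [hdiff]; exact hmem, ?_⟩
  rw [diff_trans x y x', hdiff]
  exact norm1_sub_mv_dec γ hab hcd hac hbd had hbc h1 hd1 (Or.inl h2)

theorem good_step {x x' : Edge n → ℕ} (hx : x ∈ Fiber z d c) (hx' : x' ∈ Fiber z d c)
    (hGood : Good z (diff x x')) :
    (∃ y ∈ Fiber z d c, diff x y ∈ MSet z ∧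
      norm1 (diff y x') ≤ norm1 (diff x x') - 2) ∨
    (∃ y ∈ Fiber z d c, diff x' y ∈ MSet z ∧
      norm1 (diff x y) ≤ norm1 (diff x x') - 2) := by
  obtain ⟨a, b, cc, hab, hac, hbc, h1, h2, hz⟩ := hGood
  by_cases h3 : ent (diff x x') b cc ≤ 0
  · exact Or.inl (dec_half hx hx' hab hac hbc h1 h2 hz h3)
  · push_neg at h3
    have hswap : diff x' x = -(diff x x') := diff_comm x x'
    have h1' : 1 ≤ ent (diff x' x) a cc := by rw [hswap, ent_neg]; omega
    have h2' : ent (diff x' x) a b ≤ -1 := by rw [hswap, ent_neg]; omega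
    have h3' : ent (diff x' x) cc b ≤ 0 := by
      rw [hswap, ent_neg, ent_comm]
      omega
    obtain ⟨y, hy, hmem, hnorm⟩ :=
      dec_half hx' hx hac hab hbc.symm h1' h2' hz.symm h3'
    refine Or.inr ⟨y, hy, hmem, ?_⟩
    have e1 : diff x y = -(diff y x) := diff_comm y x
    rw [e1, norm1_neg]
    have e2 : norm1 (diff x' x) = norm1 (diff x x') := by rw [hswap, norm1_neg]
    omega

end GoodStep
section SideStep
variable {n k : ℕ} {z : Fin n → Fin k} {d : Fin n → ℤ} {c : Fin k → Fin k → ℤ}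

set_option maxHeartbeats 1600000 in
theorem side_step {x x' : Edge n → ℕ} (hx : x ∈ Fiber z d c) (hx' : x' ∈ Fiber z d c)
    (hne : diff x x' ≠ 0) (hng : ¬ Good z (diff x x')) :
    (∃ y ∈ Fiber z d c, diff x y ∈ MSet z ∧
      (norm1 (diff y x') ≤ norm1 (diff x x') - 2 ∨
        (norm1 (diff y x') ≤ norm1 (diff x x') ∧ Good z (diff y x')))) ∨
    (∃ y ∈ Fiber z d c, diff x' y ∈ MSet z ∧
      (norm1 (diff x y) ≤ norm1 (diff x x') - 2 ∨
        (norm1 (diff x y) ≤ norm1 (diff x x') ∧ Good z (diff x y)))) := by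
  set γ := diff x x' with hγ
  have hker : inKer z γ := inKer_diff z hx hx'
  have hng' : ∀ p q r : Fin n, p ≠ q → p ≠ r → q ≠ r →
      1 ≤ ent γ p q → ent γ p r ≤ -1 → z q ≠ z r := by
    intro p q r e1 e2 e3 e4 e5 hzz
    exact hng ⟨p, q, r, e1, e2, e3, e4, e5, hzz⟩
  obtain ⟨a, b, hab, h1⟩ := exists_pos_entry hker hne
  obtain ⟨u, v, huv, hneg, hzu, hzv⟩ := color_find hab (hker.2 (z a) (z b)) h1
  -- basic distinctness of a, b, u, v
  have hub' : ¬ (u = b ∧ v = a) := by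
    rintro ⟨e1, e2⟩
    rw [e1, e2, ent_comm] at hneg
    omega
  have hua : u ≠ a := by
    intro h
    rw [h] at huv hneg
    by_cases hvb0 : v = b
    · rw [hvb0] at hneg; omega
    · exact hng' a b v hab huv (fun hh => hvb0 hh.symm) h1 hneg hzv.symm
  have hvb : v ≠ b := by
    intro h
    rw [h] at huv hneg
    have h1' : 1 ≤ ent γ b a := by rw [ent_comm]; exact h1
    have hneg' : ent γ b u ≤ -1 := by rw [ent_comm]; exact hneg
    exact hng' b a u (Ne.symm hab) (Ne.symm huv) (fun hh => hua hh.symm) h1' hneg'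
      hzu.symm
  have hub : u ≠ b := by
    intro h
    have hva' : v ≠ a := fun hh => hub' ⟨h, hh⟩
    rw [h] at hneg hzu huv
    have h1' : 1 ≤ ent γ b a := by rw [ent_comm]; exact h1
    exact hng' b a v (Ne.symm hab) huv (Ne.symm hva') h1' hneg (hzv.trans hzu).symm
  have hva : v ≠ a := by
    intro h
    rw [h] at hneg hzv huv
    have hneg' : ent γ a u ≤ -1 := by rw [ent_comm]; exact hneg
    exact hng' a b u hab (Ne.symm huv) (Ne.symm hub) h1 hneg' (hzu.trans hzv).symm
  -- a positive edge at u
  obtain ⟨t, ht1, htu, htv⟩ := find_pos (hker.1 u) hneg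
  have hzt : ∀ t' : Fin n, 1 ≤ ent γ u t' → t' ≠ u → t' ≠ v → z t' ≠ z v := by
    intro t' a1 a2 a3
    exact hng' u t' v (Ne.symm a2) huv a3 a1 hneg
  by_cases hA : ∃ t', (1 ≤ ent γ u t' ∧ t' ≠ u ∧ t' ≠ v) ∧ t' ≠ a
  · -- Case A : move  mv a b t u  on x
    obtain ⟨t, ⟨ht1, htu, htv⟩, hta⟩ := hA
    have htb : t ≠ b := by
      intro h
      exact hzt t ht1 htu htv (by rw [h]; exact hzv.symm)
    have hat : a ≠ t := Ne.symm hta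
    have hbu : b ≠ u := Ne.symm hub
    have hau : a ≠ u := Ne.symm hua
    have hbt : b ≠ t := Ne.symm htb
    have ht1' : 1 ≤ ent γ t u := by rw [ent_comm]; exact ht1
    have hmem : mv a b t u ∈ MSet z :=
      mem_MSet z hab htu hat hbu hau hbt (Or.inr hzu.symm)
    obtain ⟨y, hy, hdiff⟩ := apply_move hx (mv a b t u) hmem.1
      (mv_le_of_ent hab htu hat hbu hau hbt h1 ht1')
    have hdyx : diff y x' = γ - mv a b t u := by rw [diff_trans x y x', hdiff]
    refine Or.inl ⟨y, hy, by rw [hdiff]; exact hmem, ?_⟩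
    by_cases hdec : ent γ a t ≤ -1 ∨ ent γ b u ≤ -1
    · left
      rw [hdyx]
      exact norm1_sub_mv_dec γ hab htu hat hbu hau hbt h1 ht1' hdec
    · push_neg at hdec
      right
      refine ⟨by rw [hdyx]; exact norm1_sub_mv_le γ hab htu hat hbu hau hbt h1 ht1', ?_⟩
      rw [hdyx]
      have e1 : ent (γ - mv a b t u) b u = ent γ b u + 1 := by
        rw [ent_sub, ent_mv_bd γ hab htu hat hbu hau hbt]
        ring
      have e2 : ent (γ - mv a b t u) u v = ent γ u v := by
        rw [ent_sub, ent_mv_zero u v hab htu hat hbu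
          (pair_ne (Or.inl hau) (Or.inl (Ne.symm hva)))
          (pair_ne (Or.inl htu) (Or.inl htv))
          (pair_ne (Or.inl hau) (Or.inl (Ne.symm hva)))
          (pair_ne (Or.inl hbu) (Or.inl (Ne.symm hvb)))]
        ring
      refine ⟨u, b, v, hub, huv, Ne.symm hvb, ?_, ?_, hzv.symm⟩
      · rw [ent_comm, e1]; omega
      · rw [e2]; omega
  · -- the only positive edge at u goes to a
    push_neg at hA
    have hta : t = a := hA t ⟨ht1, htu, htv⟩
    rw [hta] at ht1 htu htv
    have hzav : z a ≠ z v := hzt a ht1 htu htv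
    -- positive edge at v
    have hnegvu : ent γ v u ≤ -1 := by rw [ent_comm]; exact hneg
    obtain ⟨r, hr1, hrv, hru⟩ := find_pos (hker.1 v) hnegvu
    have hzr : ∀ r' : Fin n, 1 ≤ ent γ v r' → r' ≠ v → r' ≠ u → z r' ≠ z u := by
      intro r' a1 a2 a3
      exact hng' v r' u (Ne.symm a2) (Ne.symm huv) a3 a1 hnegvu
    by_cases hB : ∃ r', (1 ≤ ent γ v r' ∧ r' ≠ v ∧ r' ≠ u) ∧ r' ≠ b
    · -- Case B1 : move  mv a b v r  on x
      obtain ⟨r, ⟨hr1, hrv, hru⟩, hrb⟩ := hB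
      have hra : r ≠ a := by
        intro h
        exact hzr r hr1 hrv hru (by rw [h]; exact hzu.symm)
      have hvr : v ≠ r := Ne.symm hrv
      have hav : a ≠ v := Ne.symm hva
      have hau : a ≠ u := Ne.symm hua
      have hbu : b ≠ u := Ne.symm hub
      have hbr : b ≠ r := Ne.symm hrb
      have har : a ≠ r := Ne.symm hra
      have hbv : b ≠ v := Ne.symm hvb
      have hmem : mv a b v r ∈ MSet z :=
        mem_MSet z hab hvr hav hbr har hbv (Or.inl hzv.symm)
      obtain ⟨y, hy, hdiff⟩ := apply_move hx (mv a b v r) hmem.1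
        (mv_le_of_ent hab hvr hav hbr har hbv h1 hr1)
      have hdyx : diff y x' = γ - mv a b v r := by rw [diff_trans x y x', hdiff]
      refine Or.inl ⟨y, hy, by rw [hdiff]; exact hmem, ?_⟩
      by_cases hdec : ent γ a v ≤ -1 ∨ ent γ b r ≤ -1
      · left
        rw [hdyx]
        exact norm1_sub_mv_dec γ hab hvr hav hbr har hbv h1 hr1 hdec
      · push_neg at hdec
        right
        refine ⟨by rw [hdyx]; exact norm1_sub_mv_le γ hab hvr hav hbr har hbv h1 hr1, ?_⟩
        rw [hdyx]
        have e1 : ent (γ - mv a b v r) a v = ent γ a v + 1 := by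
          rw [ent_sub, ent_mv_ac γ hab hvr hav hbr har hbv]
          ring
        have e2 : ent (γ - mv a b v r) u v = ent γ u v := by
          rw [ent_sub, ent_mv_zero u v hab hvr hav hbr
            (pair_ne (Or.inl hau) (Or.inl hav))
            (pair_ne (Or.inl (Ne.symm huv)) (Or.inr hru))
            (pair_ne (Or.inl hau) (Or.inl hav))
            (pair_ne (Or.inl hbu) (Or.inl hbv))]
          ring
        refine ⟨v, a, u, hva, Ne.symm huv, Ne.symm hua, ?_, ?_, hzu.symm⟩
        · rw [ent_comm, e1]; omega
        · rw [ent_comm, e2]; omega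
    · -- Case B2 : the only positive edge at v goes to b ; move  mv b s u v  on x'
      push_neg at hB
      have hrb : r = b := hB r ⟨hr1, hrv, hru⟩
      rw [hrb] at hr1 hrv hru
      have hposba : 1 ≤ ent γ b a := by rw [ent_comm]; exact h1
      obtain ⟨s, hs1, hsb, hsa⟩ := find_neg (hker.1 b) hposba
      have hzs1 : z a ≠ z s :=
        hng' b a s (Ne.symm hab) (Ne.symm hsb) (Ne.symm hsa) hposba hs1
      have hsu : s ≠ u := by
        intro h
        exact hzs1 (by rw [h]; exact hzu.symm)
      have hsv : s ≠ v := by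
        intro h
        rw [h] at hs1
        have := hr1
        rw [ent_comm] at this
        omega
      set δ := diff x' x with hδdef
      have hδ : ∀ p q, ent δ p q = - ent γ p q := by
        intro p q
        rw [hδdef, diff_comm, ent_neg]
      have hd1 : 1 ≤ ent δ b s := by rw [hδ]; omega
      have hd2 : 1 ≤ ent δ u v := by rw [hδ]; omega
      have hbs : b ≠ s := Ne.symm hsb
      have hmem : mv b s u v ∈ MSet z :=
        mem_MSet z hbs huv hru hsv hrv hsu (Or.inr hzv.symm)
      obtain ⟨y, hy, hdiff⟩ := apply_move hx' (mv b s u v) hmem.1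
        (mv_le_of_ent hbs huv hru hsv hrv hsu hd1 hd2)
      have hdyx : diff y x = δ - mv b s u v := by rw [diff_trans x' y x, hdiff]
      have hdxy : diff x y = -(δ - mv b s u v) := by rw [← hdyx, diff_comm]
      have hnδ : norm1 δ = norm1 γ := by rw [hδdef, diff_comm, norm1_neg]
      refine Or.inr ⟨y, hy, by rw [hdiff]; exact hmem, ?_⟩
      by_cases hdec : ent δ b u ≤ -1 ∨ ent δ s v ≤ -1
      · left
        rw [hdxy, norm1_neg]
        have := norm1_sub_mv_dec δ hbs huv hru hsv hrv hsu hd1 hd2 hdec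
        omega
      · push_neg at hdec
        right
        constructor
        · rw [hdxy, norm1_neg]
          have := norm1_sub_mv_le δ hbs huv hru hsv hrv hsu hd1 hd2
          omega
        · rw [hdxy]
          refine good_neg ?_
          have e1 : ent (δ - mv b s u v) b u = ent δ b u + 1 := by
            rw [ent_sub, ent_mv_ac δ hbs huv hru hsv hrv hsu]
            ring
          have e2 : ent (δ - mv b s u v) b a = ent δ b a := by
            rw [ent_sub, ent_mv_zero b a hbs huv hru hsv
              (pair_ne (Or.inr hsa) (Or.inl (Ne.symm hab)))
              (pair_ne (Or.inl hub) (Or.inl hua))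
              (pair_ne (Or.inr hua) (Or.inl (Ne.symm hab)))
              (pair_ne (Or.inl hsb) (Or.inl hsa))]
            ring
          refine ⟨b, u, a, Ne.symm hub, Ne.symm hab, hua, ?_, ?_, hzu⟩
          · rw [e1]; omega
          · rw [e2, hδ]
            omega

end SideStep
section Main
variable {n k : ℕ} {z : Fin n → Fin k} {d : Fin n → ℤ} {c : Fin k → Fin k → ℤ}

open Classical in
/-- The measure for the induction. -/
noncomputable def msr (z : Fin n → Fin k) (x x' : Edge n → ℕ) : ℕ :=
  2 * (norm1 (diff x x')).toNat + (if Good z (diff x x') then 0 else 1)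

theorem connect (z : Fin n → Fin k) (d : Fin n → ℤ) (c : Fin k → Fin k → ℤ) :
    ∀ N : ℕ, ∀ x x' : Edge n → ℕ, x ∈ Fiber z d c → x' ∈ Fiber z d c →
    msr z x x' ≤ N →
    Relation.ReflTransGen (fun a b : Edge n → ℕ => a ∈ Fiber z d c ∧ b ∈ Fiber z d c ∧
      (diff a b ∈ MSet z ∨ diff b a ∈ MSet z)) x x' := by
  intro N
  induction N with
  | zero =>
    intro x x' hx hx' hm
    by_cases hg : Good z (diff x x')
    · simp only [msr, hg, if_pos] at hm
      have h4 := norm1_nonneg (diff x x')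
      have : norm1 (diff x x') = 0 := by omega
      rw [diff_zero_eq (norm1_eq_zero this)]
    · simp only [msr, hg, if_neg, not_false_iff] at hm
      omega
  | succ N ih =>
    intro x x' hx hx' hm
    by_cases h0 : diff x x' = 0
    · rw [diff_zero_eq h0]
    · have h4 := norm1_nonneg (diff x x')
      by_cases hg : Good z (diff x x')
      · have hb2 : msr z x x' = 2 * (norm1 (diff x x')).toNat := by
          unfold msr; rw [if_pos hg]; ring
        rcases good_step hx hx' hg with ⟨y, hy, hmemM, hnorm⟩ | ⟨y, hy, hmemM, hnorm⟩
        · have h3 := norm1_nonneg (diff y x')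
          have hb1 : msr z y x' ≤ 2 * (norm1 (diff y x')).toNat + 1 := by
            unfold msr; split_ifs <;> omega
          exact Relation.ReflTransGen.head ⟨hx, hy, Or.inl hmemM⟩
            (ih y x' hy hx' (by omega))
        · have h3 := norm1_nonneg (diff x y)
          have hb1 : msr z x y ≤ 2 * (norm1 (diff x y)).toNat + 1 := by
            unfold msr; split_ifs <;> omega
          exact Relation.ReflTransGen.tail (ih x y hx hy (by omega))
            ⟨hy, hx', Or.inr hmemM⟩
      · have hb2 : msr z x x' = 2 * (norm1 (diff x x')).toNat + 1 := by
          unfold msr; rw [if_neg hg]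
        rcases side_step hx hx' h0 hg with ⟨y, hy, hmemM, hcase⟩ | ⟨y, hy, hmemM, hcase⟩
        · have h3 := norm1_nonneg (diff y x')
          refine Relation.ReflTransGen.head ⟨hx, hy, Or.inl hmemM⟩
            (ih y x' hy hx' ?_)
          rcases hcase with hnorm | ⟨hnorm, hgood⟩
          · have hb1 : msr z y x' ≤ 2 * (norm1 (diff y x')).toNat + 1 := by
              unfold msr; split_ifs <;> omega
            omega
          · have hb1 : msr z y x' = 2 * (norm1 (diff y x')).toNat := by
              unfold msr; rw [if_pos hgood]; ring
            omega
        · have h3 := norm1_nonneg (diff x y)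
          refine Relation.ReflTransGen.tail (ih x y hx hy ?_) ⟨hy, hx', Or.inr hmemM⟩
          rcases hcase with hnorm | ⟨hnorm, hgood⟩
          · have hb1 : msr z x y ≤ 2 * (norm1 (diff x y)).toNat + 1 := by
              unfold msr; split_ifs <;> omega
            omega
          · have hb1 : msr z x y = 2 * (norm1 (diff x y)).toNat := by
              unfold msr; rw [if_pos hgood]; ring
            omega

end Main

/-- `M_{n,z}` is a Markov basis for `DC_{n,z}`: for every `b = (d; c)`,
the graph on the fiber `F(b)` whose edges are differences lying in `±M_{n,z}` is connected. -/
theorem markov_basis_of_quadratic_moves (n k : ℕ) (hn : 0 < n) (hk : 0 < k)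
    (z : Fin n → Fin k) (d : Fin n → ℤ) (c : Fin k → Fin k → ℤ)
    (x x' : Edge n → ℕ) (hx : x ∈ Fiber z d c) (hx' : x' ∈ Fiber z d c) :
    Relation.ReflTransGen
      (fun a b : Edge n → ℕ => a ∈ Fiber z d c ∧ b ∈ Fiber z d c ∧
        (diff a b ∈ MSet z ∨ diff b a ∈ MSet z)) x x' :=
  connect z d c (msr z x x') x x' hx hx' le_rfl
end

section
/- For every integer k ≥ 3, with n = 2k, z the k-coloring of {1,…,2k} with z(u) ≡ u (mod k), and (d_k; c_k) as specified, the simple fiber F̃(d_k; c_k) = {γ ∈ {0,1}^P : DC_{2k,z} γ = (d_k; c_k)} contains exactly two elements γ₁ and γ₂, and ‖γ₁ − γ₂‖₁ = 2k. -/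
/-!
Write `a_i` and `b_i` for the two vertices of colour `i`, of degree 3 and 1. As `c_k` vanishes
off consecutive colours, a simple fiber element only uses edges between colours `i` and `i + 1`,
so it is described by the 0/1 pattern `E_i` of edges from `{a_i, b_i}` to `{a_{i+1}, b_{i+1}}`.
The colour counts say that every `E_i` has two ones; the degree of `a_i` then forces `a_i` to
have one or two forward edges, and two forward edges at `a_i` force two at `a_{i+1}`. Going
around the cycle, either every `a_i` is joined to `a_{i+1}` and `b_{i+1}` (`γ₁`), or every
`a_{i+1}` to `a_i` and `b_i` (`γ₂`); these differ on the `2k` edges `a_i b_{i+1}`, `b_i a_{i+1}`.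
-/

open Finset

section EdgeSums

variable {n : ℕ}

lemma entN_comm (x : Edge n → ℕ) (u v : Fin n) : entN x u v = entN x v u := by
  unfold entN
  rcases lt_trichotomy u v with h | rfl | h
  · rw [dif_pos h, dif_neg (asymm h), dif_pos h]
  · rfl
  · rw [dif_neg (asymm h), dif_pos h, dif_pos h]

lemma entN_self (x : Edge n → ℕ) (u : Fin n) : entN x u u = 0 := by
  simp [entN]

lemma entN_of_lt (x : Edge n → ℕ) {u v : Fin n} (h : u < v) : entN x u v = x ⟨(u, v), h⟩ :=
  dif_pos h

lemma entN_le_one {x : Edge n → ℕ} (hx : ∀ e, x e ≤ 1) (u v : Fin n) : entN x u v ≤ 1 := by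
  unfold entN
  split_ifs
  exacts [hx _, hx _, zero_le_one]

lemma sum_sum_eq_two_nsmul_sum_edge {M : Type*} [AddCommMonoid M] (F : Fin n → Fin n → M)
    (hF : ∀ u v, F u v = F v u) (hF₀ : ∀ u, F u u = 0) :
    ∑ u, ∑ v, F u v = 2 • ∑ e : Edge n, F e.1.1 e.1.2 := by
  have hsplit : ∀ p : Fin n × Fin n, F p.1 p.2 =
      (if p.1 < p.2 then F p.1 p.2 else 0) + if p.2 < p.1 then F p.2 p.1 else 0 := by
    rintro ⟨u, v⟩
    rcases lt_trichotomy u v with h | rfl | h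
    · simp [h, asymm h]
    · simp [hF₀]
    · simp [h, asymm h, hF u v]
  have hswap : ∑ p : Fin n × Fin n, (if p.2 < p.1 then F p.2 p.1 else 0) =
      ∑ p : Fin n × Fin n, if p.1 < p.2 then F p.1 p.2 else 0 :=
    Fintype.sum_equiv (Equiv.prodComm _ _) _ _ fun _ => rfl
  have hedge : ∑ p : Fin n × Fin n, (if p.1 < p.2 then F p.1 p.2 else 0) =
      ∑ e : Edge n, F e.1.1 e.1.2 := by
    rw [← Finset.sum_filter, Finset.sum_subtype]
    simp
  rw [← Fintype.sum_prod_type', Fintype.sum_congr _ _ hsplit, Finset.sum_add_distrib, hswap,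
    hedge, two_nsmul]

end EdgeSums

section Colouring

variable {n m k : ℕ}

lemma entN_eq_zero_of_colorSeqN_eq_zero {z : Fin n → Fin k} {x : Edge n → ℕ} {u v : Fin n}
    (h : colorSeqN z x (z u) (z v) = 0) : entN x u v = 0 := by
  have hterm := Finset.sum_eq_zero_iff.mp h
  rcases lt_trichotomy u v with huv | rfl | huv
  · simpa [entN_of_lt x huv] using hterm ⟨(u, v), huv⟩ (mem_univ _)
  · exact entN_self x u
  · simpa [entN_comm x u, entN_of_lt x huv] using hterm ⟨(v, u), huv⟩ (mem_univ _)

lemma colorSeqN_eq_sum_layers {z : Fin (m * k) → Fin k} (hz : ∀ p, z (finProdFinEquiv p) = p.2)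
    (x : Edge (m * k) → ℕ) {i j : Fin k} (hij : i ≠ j) :
    colorSeqN z x i j =
      ∑ l, ∑ l', entN x (finProdFinEquiv (l, i)) (finProdFinEquiv (l', j)) := by
  set F : Fin (m * k) → Fin (m * k) → ℕ := fun u v =>
    if (z u = i ∧ z v = j) ∨ (z u = j ∧ z v = i) then entN x u v else 0 with hF
  have hdouble := sum_sum_eq_two_nsmul_sum_edge F
    (fun u v => by simp only [hF, entN_comm x u v, and_comm, or_comm])
    (fun u => by simp [hF, entN_self])
  have hedge : ∑ e : Edge (m * k), F e.1.1 e.1.2 = colorSeqN z x i j :=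
    Fintype.sum_congr _ _ fun e => by simp [hF, entN_of_lt x e.2]
  have hor : ∀ (a b : Fin k) (w : ℕ), (if (a = i ∧ b = j) ∨ (a = j ∧ b = i) then w else 0) =
      (if a = i then if b = j then w else 0 else 0) +
        if a = j then if b = i then w else 0 else 0 := by
    intro a b w
    split_ifs <;> simp_all
  rw [hedge, ← Equiv.sum_comp finProdFinEquiv,
    Fintype.sum_congr _ _ fun _ => (Equiv.sum_comp finProdFinEquiv _).symm] at hdouble
  simp only [hF, hz, Fintype.sum_prod_type, hor, sum_add_distrib] at hdouble
  simp only [sum_ite_irrel, sum_const_zero, sum_ite_eq', mem_univ, if_true] at hdouble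
  rw [sum_comm (f := fun l l' => entN x (finProdFinEquiv (l, j)) _)] at hdouble
  simp only [entN_comm x (finProdFinEquiv (_, j))] at hdouble
  rw [two_nsmul] at hdouble
  omega

end Colouring

namespace Fin

variable {k : ℕ} [NeZero k]

theorem add_one_ne_self (hk : 1 < k) (i : Fin k) : i + 1 ≠ i := by
  rw [Ne, add_eq_left, Fin.ext_iff, Fin.val_one', Nat.one_mod_eq_one.mpr (by omega)]
  simp

theorem add_one_add_one_ne_self (hk : 3 ≤ k) (i : Fin k) : i + 1 + 1 ≠ i := by
  rw [add_assoc, Ne, add_eq_left, Fin.ext_iff, Fin.val_add, Fin.val_one',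
    Nat.one_mod_eq_one.mpr (by omega), Fin.val_zero, Nat.mod_eq_of_lt (by omega)]
  omega

theorem eq_add_one_iff_val (hk : 1 < k) {i j : Fin k} : j = i + 1 ↔ (i.val + 1) % k = j.val := by
  rw [Fin.ext_iff, Fin.val_add, Fin.val_one', Nat.one_mod_eq_one.mpr (by omega), eq_comm]

open Fin.NatCast in
theorem forall_of_imp_add_one {P : Fin k → Prop} {i₀ : Fin k} (h₀ : P i₀)
    (hstep : ∀ i, P i → P (i + 1)) (i : Fin k) : P i := by
  have hreach : ∀ n : ℕ, P (i₀ + (n : Fin k)) := by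
    intro n
    induction n with
    | zero => simpa using h₀
    | succ n ih => simpa [Nat.cast_succ, ← add_assoc] using hstep _ ih
  simpa using hreach (i - i₀).val

end Fin

section Band

variable {m k : ℕ} [NeZero k] {M : Type*}

/-- The pair `(l, i)` stands for the vertex `finProdFinEquiv (l, i) = i + k * l` of layer `l`
and colour `i`; `E i l l'` is the weight of the edge joining `(l, i)` to `(l', i + 1)`, and edges
between non-consecutive colours have weight `0`. -/
def bandAdj [Zero M] (E : Fin k → Fin m → Fin m → M) (p q : Fin m × Fin k) : M :=
  if q.2 = p.2 + 1 then E p.2 p.1 q.1 else if p.2 = q.2 + 1 then E q.2 q.1 p.1 else 0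

def bandVec [Zero M] (E : Fin k → Fin m → Fin m → M) : Edge (m * k) → M :=
  fun e => bandAdj E (finProdFinEquiv.symm e.1.1) (finProdFinEquiv.symm e.1.2)

section

variable [Zero M] (E : Fin k → Fin m → Fin m → M)

lemma bandAdj_succ (l l' : Fin m) (i : Fin k) : bandAdj E (l, i) (l', i + 1) = E i l l' := by
  simp [bandAdj]

lemma bandAdj_comm (hk : 3 ≤ k) (p q : Fin m × Fin k) : bandAdj E p q = bandAdj E q p := by
  unfold bandAdj
  split_ifs with h₁ h₂ h₂ <;> try rfl
  exact absurd (h₂ ▸ h₁).symm (Fin.add_one_add_one_ne_self hk _)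

lemma bandAdj_self (hk : 1 < k) (p : Fin m × Fin k) : bandAdj E p p = 0 := by
  simp [bandAdj, (Fin.add_one_ne_self hk p.2).symm]

lemma entN_bandVec (hk : 3 ≤ k) (E : Fin k → Fin m → Fin m → ℕ) (p q : Fin m × Fin k) :
    entN (bandVec E) (finProdFinEquiv p) (finProdFinEquiv q) = bandAdj E p q := by
  unfold entN
  split_ifs with h₁ h₂
  · simp [bandVec]
  · simp [bandVec, bandAdj_comm E hk q p]
  · rw [finProdFinEquiv.injective (le_antisymm (not_lt.mp h₂) (not_lt.mp h₁)),
      bandAdj_self E (by omega)]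

lemma bandVec_map₂ {N P : Type*} [Zero N] [Zero P] (f : M → N → P) (hf : f 0 0 = 0)
    (E' : Fin k → Fin m → Fin m → N) (e : Edge (m * k)) :
    f (bandVec E e) (bandVec E' e) = bandVec (fun i l l' => f (E i l l') (E' i l l')) e := by
  unfold bandVec bandAdj
  split_ifs <;> simp [hf]

end

lemma sum_bandAdj [AddCommMonoid M] (hk : 3 ≤ k) (E : Fin k → Fin m → Fin m → M)
    (p : Fin m × Fin k) :
    ∑ q, bandAdj E p q = ∑ l', E p.2 p.1 l' + ∑ l', E (p.2 - 1) l' p.1 := by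
  have hsplit : ∀ q : Fin m × Fin k, bandAdj E p q =
      (if q.2 = p.2 + 1 then E p.2 p.1 q.1 else 0) +
        if q.2 = p.2 - 1 then E q.2 q.1 p.1 else 0 := by
    intro q
    simp only [bandAdj, eq_sub_iff_add_eq, eq_comm (a := p.2)]
    split_ifs with h₁ h₂ h₂
    · exact absurd (h₂ ▸ h₁).symm (Fin.add_one_add_one_ne_self hk _)
    all_goals simp
  simp only [Fintype.sum_congr _ _ hsplit, sum_add_distrib, Fintype.sum_prod_type, sum_ite_eq',
    mem_univ, if_true]

lemma sum_sum_bandAdj [AddCommMonoid M] (hk : 3 ≤ k) (E : Fin k → Fin m → Fin m → M) :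
    ∑ p, ∑ q, bandAdj E p q = 2 • ∑ i, ∑ l, ∑ l', E i l l' := by
  have hshift : ∑ i : Fin k, ∑ l, ∑ l', E (i - 1) l' l = ∑ i, ∑ l, ∑ l', E i l l' :=
    (Fintype.sum_equiv (Equiv.subRight (1 : Fin k)) _ (fun i => ∑ l, ∑ l', E i l' l)
      fun _ => rfl).trans (Fintype.sum_congr _ _ fun _ => sum_comm)
  simp only [sum_bandAdj hk, sum_add_distrib, Fintype.sum_prod_type]
  rw [sum_comm, sum_comm (f := fun l i => ∑ l', E (i - 1) l' l), hshift, two_nsmul]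

lemma sum_bandVec [AddCommMonoid M] [IsAddTorsionFree M] (hk : 3 ≤ k)
    (E : Fin k → Fin m → Fin m → M) :
    ∑ e, bandVec E e = ∑ i, ∑ l, ∑ l', E i l l' := by
  apply nsmul_right_injective two_ne_zero
  have hvertex := sum_sum_eq_two_nsmul_sum_edge
    (fun u v => bandAdj E (finProdFinEquiv.symm u) (finProdFinEquiv.symm v))
    (fun _ _ => bandAdj_comm E hk _ _) fun _ => bandAdj_self E (by omega) _
  have hreindex : ∑ u, ∑ v, bandAdj E (finProdFinEquiv.symm u) (finProdFinEquiv.symm v) =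
      ∑ p, ∑ q, bandAdj E p q :=
    (Equiv.sum_comp finProdFinEquiv.symm _).trans
      (Fintype.sum_congr _ _ fun _ => Equiv.sum_comp finProdFinEquiv.symm _)
  exact hvertex.symm.trans (hreindex.trans (sum_sum_bandAdj hk E))

lemma norm1_sub_bandVec (hk : 3 ≤ k) (E E' : Fin k → Fin m → Fin m → ℕ) :
    norm1 (fun e => ((bandVec E e : ℕ) : ℤ) - (bandVec E' e : ℕ)) =
      ∑ i, ∑ l, ∑ l', |(E i l l' : ℤ) - E' i l l'| := by
  rw [norm1, ← sum_bandVec hk]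
  exact Fintype.sum_congr _ _ (bandVec_map₂ E (fun a b : ℕ => |(a : ℤ) - b|) (by simp) E')

lemma degSeqN_bandVec (hk : 3 ≤ k) (E : Fin k → Fin m → Fin m → ℕ) (p : Fin m × Fin k) :
    degSeqN (bandVec E) (finProdFinEquiv p) = ∑ l', E p.2 p.1 l' + ∑ l', E (p.2 - 1) l' p.1 := by
  rw [degSeqN, ← Equiv.sum_comp finProdFinEquiv, ← sum_bandAdj hk]
  exact Fintype.sum_congr _ _ fun q => entN_bandVec hk E p q

end Band

section Fiber

variable {m k : ℕ} [NeZero k] {z : Fin (m * k) → Fin k}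

lemma colorSeqN_bandVec (hk : 3 ≤ k) (hz : ∀ p, z (finProdFinEquiv p) = p.2)
    (E : Fin k → Fin m → Fin m → ℕ) (i j : Fin k) :
    colorSeqN z (bandVec E) i j = if j = i + 1 then ∑ l, ∑ l', E i l l'
      else if i = j + 1 then ∑ l, ∑ l', E j l l' else 0 := by
  have hi : i ≠ i + 1 := (Fin.add_one_ne_self (by omega) i).symm
  by_cases hij : i = j
  · subst hij
    rw [if_neg hi, if_neg hi]
    refine sum_eq_zero fun e _ => ?_
    have hcol : ∀ u, z u = (finProdFinEquiv.symm u).2 := fun u => by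
      rw [← hz, Equiv.apply_symm_apply]
    simp only [hcol, or_self]
    split_ifs with h
    · simp only [bandVec, bandAdj, h.1, h.2, if_neg hi]
    · rfl
  · rw [colorSeqN_eq_sum_layers hz _ hij]
    simp only [entN_bandVec hk, bandAdj]
    split_ifs
    · rfl
    · exact sum_comm
    · simp

lemma bandVec_le_one_iff (hk : 3 ≤ k) (E : Fin k → Fin m → Fin m → ℕ) :
    (∀ e, bandVec E e ≤ 1) ↔ ∀ i l l', E i l l' ≤ 1 := by
  constructor
  · intro h i l l'
    rw [← bandAdj_succ E, ← entN_bandVec hk]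
    exact entN_le_one h _ _
  · intro h e
    unfold bandVec bandAdj
    split_ifs
    exacts [h _ _ _, h _ _ _, zero_le_one]

def bandPattern (x : Edge (m * k) → ℕ) : Fin k → Fin m → Fin m → ℕ :=
  fun i l l' => entN x (finProdFinEquiv (l, i)) (finProdFinEquiv (l', i + 1))

lemma eq_bandVec_bandPattern (hz : ∀ p, z (finProdFinEquiv p) = p.2) {x : Edge (m * k) → ℕ}
    (hx : ∀ i j, j ≠ i + 1 → i ≠ j + 1 → colorSeqN z x i j = 0) :
    x = bandVec (bandPattern x) := by
  have hadj : ∀ p q,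
      entN x (finProdFinEquiv p) (finProdFinEquiv q) = bandAdj (bandPattern x) p q := by
    rintro ⟨l, i⟩ ⟨l', j⟩
    unfold bandAdj
    split_ifs with h₁ h₂
    · subst h₁; rfl
    · subst h₂; exact entN_comm x _ _
    · apply entN_eq_zero_of_colorSeqN_eq_zero (z := z)
      rw [hz, hz]
      exact hx i j h₁ h₂
  funext e
  obtain ⟨⟨u, v⟩, huv⟩ := e
  have h := hadj (finProdFinEquiv.symm u) (finProdFinEquiv.symm v)
  rwa [Equiv.apply_symm_apply, Equiv.apply_symm_apply, entN_of_lt x huv] at h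

theorem bandVec_mem_simpleFiber_iff (hk : 3 ≤ k) (hz : ∀ p, z (finProdFinEquiv p) = p.2)
    {d : Fin (m * k) → ℤ} {D : Fin m → ℕ} (hd : ∀ p, d (finProdFinEquiv p) = D p.1)
    {c : Fin k → Fin k → ℤ} {C : ℕ}
    (hc : ∀ i j, c i j = if j = i + 1 ∨ i = j + 1 then (C : ℤ) else 0)
    (E : Fin k → Fin m → Fin m → ℕ) :
    bandVec E ∈ SimpleFiber z d c ↔ ∀ i, (∀ l l', E i l l' ≤ 1) ∧ ∑ l, ∑ l', E i l l' = C ∧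
      ∀ l, ∑ l', E i l l' + ∑ l', E (i - 1) l' l = D l := by
  have hdeg : (∀ u, (degSeqN (bandVec E) u : ℤ) = d u) ↔
      ∀ i l, ∑ l', E i l l' + ∑ l', E (i - 1) l' l = D l := by
    rw [finProdFinEquiv.symm.forall_congr_left]
    simp only [Equiv.symm_symm, degSeqN_bandVec hk, hd, Prod.forall, Nat.cast_inj]
    exact forall_comm
  have hcol : (∀ i j, (colorSeqN z (bandVec E) i j : ℤ) = c i j) ↔
      ∀ i, ∑ l, ∑ l', E i l l' = C := by
    simp only [colorSeqN_bandVec hk hz, hc]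
    refine ⟨fun h i => by simpa [-Nat.cast_sum] using h i (i + 1), fun h i j => ?_⟩
    split_ifs <;> simp_all [-Nat.cast_sum]
  simp only [SimpleFiber, Fiber, Set.mem_ofPred_eq, hdeg, hcol, bandVec_le_one_iff hk, forall_and]
  tauto

end Fiber

lemma pattern_eq_or_eq_of_sums {k : ℕ} [NeZero k] (E : Fin k → Fin 2 → Fin 2 → ℕ)
    (hle : ∀ i l l', E i l l' ≤ 1) (hsum : ∀ i, ∑ l, ∑ l', E i l l' = 2)
    (hdeg : ∀ i, ∑ l', E i 0 l' + ∑ l', E (i - 1) l' 0 = 3) :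
    E = (fun _ => ![![1, 1], ![0, 0]]) ∨ E = fun _ => ![![1, 0], ![1, 0]] := by
  simp only [Fin.sum_univ_two] at hsum hdeg
  have hle' : ∀ i, E i 0 0 ≤ 1 ∧ E i 0 1 ≤ 1 ∧ E i 1 0 ≤ 1 ∧ E i 1 1 ≤ 1 :=
    fun i => ⟨hle i 0 0, hle i 0 1, hle i 1 0, hle i 1 1⟩
  have hdeg' : ∀ i, E (i + 1) 0 0 + E (i + 1) 0 1 + (E i 0 0 + E i 1 0) = 3 := fun i => by
    simpa using hdeg (i + 1)
  have hpos : ∀ i, 1 ≤ E i 0 0 + E i 0 1 := fun i => by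
    have := hdeg i; have := hle' (i - 1); omega
  -- The forward degree `E i 0 0 + E i 0 1` of `a_i` is `1` or `2`, and `2` propagates to `i + 1`.
  by_cases hfull : ∃ i₀, E i₀ 0 0 + E i₀ 0 1 = 2
  · left
    obtain ⟨i₀, h₀⟩ := hfull
    have hall : ∀ i, E i 0 0 + E i 0 1 = 2 := Fin.forall_of_imp_add_one h₀ fun i hi => by
      have := hsum i; have := hdeg' i; have := hle' i; have := hle' (i + 1); omega
    funext i l l'
    have := hall i; have := hsum i; have := hle' i
    fin_cases l <;> fin_cases l' <;> simp <;> omega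
  · right
    simp only [not_exists] at hfull
    funext i l l'
    have := hfull (i + 1); have := hpos (i + 1); have := hle' (i + 1)
    have := hfull i; have := hdeg' i; have := hsum i; have := hle' i
    fin_cases l <;> fin_cases l' <;> simp <;> omega

theorem simpleFiber_eq_pair {k : ℕ} [NeZero k] (hk : 3 ≤ k) {z : Fin (2 * k) → Fin k}
    (hz : ∀ p, z (finProdFinEquiv p) = p.2) {d : Fin (2 * k) → ℤ}
    (hd : ∀ p, d (finProdFinEquiv p) = (![3, 1] p.1 : ℕ)) {c : Fin k → Fin k → ℤ}
    (hc : ∀ i j, c i j = if j = i + 1 ∨ i = j + 1 then ((2 : ℕ) : ℤ) else 0) :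
    SimpleFiber z d c =
      {bandVec fun _ => ![![1, 1], ![0, 0]], bandVec fun _ => ![![1, 0], ![1, 0]]} := by
  ext x
  constructor
  · intro hx
    have hband : ∀ i j, j ≠ i + 1 → i ≠ j + 1 → colorSeqN z x i j = 0 := fun i j h₁ h₂ => by
      simpa [hc, h₁, h₂] using hx.1.2 i j
    rw [eq_bandVec_bandPattern hz hband, bandVec_mem_simpleFiber_iff hk hz hd hc] at hx
    rw [eq_bandVec_bandPattern hz hband]
    rcases pattern_eq_or_eq_of_sums _ (fun i => (hx i).1) (fun i => (hx i).2.1)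
      (fun i => (hx i).2.2 0) with h | h <;> simp [h]
  · rintro (rfl | rfl) <;> refine (bandVec_mem_simpleFiber_iff hk hz hd hc _).2 fun _ => ?_ <;>
      simp [Fin.forall_fin_two, Fin.sum_univ_two]

/-- For every `k ≥ 3`, with `n = 2k`, the coloring `z(u) ≡ u (mod k)`, and
the indicated `(d_k; c_k)`, the simple fiber has exactly two elements `γ₁, γ₂`, and
`‖γ₁ − γ₂‖₁ = 2k`. -/
theorem simple_fiber_with_two_elements (k : ℕ) (hk : 3 ≤ k) :
    ∃ γ₁ γ₂ : Edge (2 * k) → ℕ, γ₁ ≠ γ₂ ∧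
      SimpleFiber (fun u : Fin (2 * k) => (⟨u.val % k, Nat.mod_lt _ (by omega)⟩ : Fin k))
        (fun u : Fin (2 * k) => if u.val < k then 3 else 1)
        (fun i j : Fin k =>
          if (i.val + 1) % k = j.val ∨ (j.val + 1) % k = i.val then 2 else 0)
        = {γ₁, γ₂} ∧
      norm1 (fun e => (γ₁ e : ℤ) - (γ₂ e : ℤ)) = 2 * k := by
  have : NeZero k := ⟨by omega⟩
  have hnorm : norm1 (fun e => ((bandVec (fun _ : Fin k => ![![1, 1], ![0, 0]]) e : ℕ) : ℤ) -
      (bandVec (fun _ : Fin k => ![![1, 0], ![1, 0]]) e : ℕ)) = 2 * k := by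
    simp [norm1_sub_bandVec hk, Fin.sum_univ_two, mul_comm]
  refine ⟨_, _, fun h => ?_, simpleFiber_eq_pair hk ?_ ?_ ?_, hnorm⟩
  · rw [h] at hnorm
    simp [norm1] at hnorm
    omega
  · intro p
    ext
    simp [Nat.mod_eq_of_lt p.2.isLt]
  · rintro ⟨l, i⟩
    fin_cases l <;> simp [i.isLt]
  · intro i j
    simp only [Fin.eq_add_one_iff_val (by omega : 1 < k), Nat.cast_ofNat]
end
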